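/- Let (A,·,α) be a multiplicative Hom-associative algebra. Then (A,[·,·],α) with [x,y] = x·y − y·x is a Hom-Lie algebra, i.e. the bracket is antisymmetric and satisfies the Hom-Jacobi identity [α(x),[y,z]] + [α(y),[z,x]] + [α(z),[x,y]] = 0. -/

import Mathlib

/-- Hom-associativity: (x·y)·α(z) = α(x)·(y·z). -/
def IsHomAssoc {A : Type*} (m : A → A → A) (a : A → A) : Prop :=
  ∀ x y z, m (m x y) (a z) = m (a x) (m y z)

/-- Hom-Lie algebra: antisymmetric bracket with Hom-Jacobi identity. -/
def IsHomLie {A : Type*} [AddCommGroup A] (b : A → A → A) (a : A → A) : Prop :=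
  (∀ x y, b x y = - b y x) ∧
  (∀ x y z, b (a x) (b y z) + b (a y) (b z x) + b (a z) (b x y) = 0)

/-- (left) Hom-Leibniz identity. -/
def IsHomLeibniz {A : Type*} [AddCommGroup A] (b : A → A → A) (a : A → A) : Prop :=
  ∀ x y z, b (a x) (b y z) = b (b x y) (a z) + b (a y) (b x z)

/-- Hom-Jordan algebra: commutative with α(x²)∘(α(y)∘α(x)) = (x²∘α(y))∘α²(x). -/
def IsHomJordan {A : Type*} (m : A → A → A) (a : A → A) : Prop :=
  (∀ x y, m x y = m y x) ∧
  (∀ x y, m (a (m x x)) (m (a y) (a x)) = m (m (m x x) (a y)) (a (a x)))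

/-- Hom-associative dialgebra with left product `vd` (⊢) and right product `dv` (⊣). -/
def IsHomDialg {A : Type*} (vd dv : A → A → A) (a : A → A) : Prop :=
  (∀ x y z, vd (dv x y) (a z) = vd (vd x y) (a z)) ∧
  (∀ x y z, dv (a x) (dv y z) = dv (a x) (vd y z)) ∧
  (∀ x y z, dv (dv x y) (a z) = dv (a x) (dv y z)) ∧
  (∀ x y z, vd (vd x y) (a z) = vd (a x) (vd y z)) ∧
  (∀ x y z, dv (vd x y) (a z) = vd (a x) (dv y z))

/-- Left Hom-Jordan dialgebra. -/
def IsHomJordanDialg {A : Type*} [AddCommGroup A] (m : A → A → A) (a : A → A) : Prop :=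
  (∀ x1 x2 x3, m (m x1 x2) x3 = m (m x2 x1) x3) ∧
  (∀ x1 x2 x3 x4,
    m (m (m x4 x3) (a x2)) (a (a x1)) + m (a (a x4)) (m (a x2) (m x3 x1))
      + m (a (a x3)) (m (a x2) (m x4 x1))
    = m (a (m x4 x3)) (m (a x2) (a x1)) + m (m (a x4) (a x2)) (a (m x3 x1))
      + m (m (a x3) (a x2)) (a (m x4 x1))) ∧
  (∀ x1 x2 x3 x4,
    m (a (a x1)) (m (m x4 x3) x2) + m (a (a x4)) (m (m x3 x1) x2)
      + m (a (a x3)) (m (m x4 x1) x2)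
    = m (a (m x4 x3)) (m (a x1) x2) + m (a (m x1 x3)) (m (a x4) x2)
      + m (a (m x4 x1)) (m (a x3) x2))

/-- Hom-associative trialgebra with products ⊢ = `vd`, ⊣ = `dv`, ⊥ = `mp`. -/
def IsHomTrialg {A : Type*} (vd dv mp : A → A → A) (a : A → A) : Prop :=
  IsHomDialg vd dv a ∧ IsHomAssoc mp a ∧
  (∀ x y z, dv (dv x y) (a z) = dv (a x) (mp y z)) ∧
  (∀ x y z, dv (mp x y) (a z) = mp (a x) (dv y z)) ∧
  (∀ x y z, mp (dv x y) (a z) = mp (a x) (vd y z)) ∧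
  (∀ x y z, mp (vd x y) (a z) = vd (a x) (mp y z)) ∧
  (∀ x y z, vd (mp x y) (a z) = vd (a x) (vd y z))

/-- Left Hom-Leibniz trialgebra: Hom-Leibniz bracket `br`, Hom-Lie bracket `lie`,
plus the two compatibilities. -/
def IsHomLeibnizTrialg {A : Type*} [AddCommGroup A] (br lie : A → A → A) (a : A → A) : Prop :=
  IsHomLeibniz br a ∧ IsHomLie lie a ∧
  (∀ x y z, br (a x) (lie y z) = lie (br x y) (a z) + lie (a y) (br x z)) ∧
  (∀ x y z, br (lie x y) (a z) = br (br x y) (a z))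

/-- Bimodule of a Hom-associative algebra. -/
def IsBimodule {A V : Type*} (mul : A → A → A) (al : A → A)
    (l r : A → V → V) (be : V → V) : Prop :=
  (∀ x u, be (l x u) = l (al x) (be u)) ∧
  (∀ x u, be (r x u) = r (al x) (be u)) ∧
  (∀ x y u, l (mul x y) (be u) = l (al x) (l y u)) ∧
  (∀ x y u, r (mul x y) (be u) = r (al y) (r x u)) ∧
  (∀ x y u, l (al x) (r y u) = r (al y) (l x u))

/-- Representation of a Hom-Lie algebra. -/
def IsHomLieRep {A V : Type*} [AddCommGroup V] (br : A → A → A) (al : A → A)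
    (rho : A → V → V) (be : V → V) : Prop :=
  (∀ x u, be (rho x u) = rho (al x) (be u)) ∧
  (∀ x y u, rho (br x y) (be u) = rho (al x) (rho y u) - rho (al y) (rho x u))

/-- Representation of a Hom-Jordan algebra. -/
def IsHomJordanRep {A V : Type*} [AddCommGroup V] (m : A → A → A) (al : A → A)
    (pi : A → V → V) (be : V → V) : Prop :=
  (∀ x u, be (pi x u) = pi (al x) (be u)) ∧
  (∀ x y z u,
    pi (al (al x)) (pi (m y z) (be u)) + pi (al (al y)) (pi (m z x) (be u))
      + pi (al (al z)) (pi (m x y) (be u))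
    = pi (m (al x) (al y)) (pi (al z) (be u)) + pi (m (al y) (al z)) (pi (al x) (be u))
      + pi (m (al z) (al x)) (pi (al y) (be u))) ∧
  (∀ x y z u,
    pi (m (m x y) (al z)) (be (be u)) + pi (al (al x)) (pi (al z) (pi y u))
      + pi (al (al y)) (pi (al z) (pi x u))
    = pi (m (al x) (al y)) (pi (al z) (be u)) + pi (m (al y) (al z)) (pi (al x) (be u))
      + pi (m (al x) (al z)) (pi (al y) (be u)))

/-- Action of a Hom-associative algebra (A,·,α) on a Hom-associative algebra (V,·_V,β). -/
def IsHomAssocAction {A V : Type*} (mul : A → A → A) (al : A → A)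
    (l r : A → V → V) (be : V → V) (mulV : V → V → V) : Prop :=
  IsBimodule mul al l r be ∧ IsHomAssoc mulV be ∧
  (∀ x u v, l (al x) (mulV u v) = mulV (l x u) (be v)) ∧
  (∀ x u v, r (al x) (mulV u v) = mulV (be u) (r x v)) ∧
  (∀ x u v, mulV (be u) (l x v) = mulV (r x u) (be v))

/-- Action of a Hom-Lie algebra (A,[·,·],α) on a Hom-Lie algebra (V,[·,·]_V,β). -/
def IsHomLieAction {A V : Type*} [AddCommGroup V] (br : A → A → A) (al : A → A)
    (rho : A → V → V) (be : V → V) (brV : V → V → V) : Prop :=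
  IsHomLieRep br al rho be ∧ IsHomLie brV be ∧
  (∀ x u v, rho (al x) (brV u v) = brV (rho x u) (be v) + brV (be u) (rho x v))

theorem stmt0 {K : Type*} [Field K] {A : Type*} [AddCommGroup A] [Module K A]
    (mul : A →ₗ[K] A →ₗ[K] A) (α : A →ₗ[K] A)
    (hassoc : IsHomAssoc (fun x y => mul x y) (fun x => α x))
    (hmult : ∀ x y, α (mul x y) = mul (α x) (α y)) :
    IsHomLie (fun x y => mul x y - mul y x) (fun x => α x) := by
  constructor
  · intro x y; exact (neg_sub _ _).symm
  · intro x y z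
    simp only [map_sub, LinearMap.sub_apply]
    have h := fun x y z => hassoc x y z
    simp only at h
    rw [h x y z, h y z x, h z x y, h x z y, h z y x, h y x z]
    abel
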